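/- (Proposition 2.1, combination part.) Let (Ω, μ) be a probability space, let X : Ω → 𝒳 be a measurable map into a measurable space 𝒳, and let P₁, P₂ : Ω → ℝ be random variables taking values in (0,1) such that P₁ is measurable with respect to σ(X), P₁ is uniformly distributed on (0,1), and for every u ∈ [0,1] the conditional expectation E[1{P₂ ≤ u} | σ(X)] equals u μ-almost everywhere. Let w₁, w₂ be positive real constants with w₁² + w₂² = 1. Then the combined p-value P = Φ̄(w₁·z(P₁) + w₂·z(P₂)) is uniformly distributed on (0,1). -/

import Mathlib

open MeasureTheory ProbabilityTheory Set Filter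
open scoped NNReal ENNReal

/-- The cumulative distribution function `Φ` of the standard Gaussian measure on `ℝ`. -/
noncomputable def stdGaussCDF (x : ℝ) : ℝ := ((gaussianReal 0 1) (Set.Iic x)).toReal

/-- The survival function `Φ̄ = 1 - Φ` of the standard Gaussian measure. -/
noncomputable def stdGaussSurv (x : ℝ) : ℝ := 1 - stdGaussCDF x

/-- `z(u) = Φ̄⁻¹(u)`, the inverse of the standard Gaussian survival function. -/
noncomputable def zval : ℝ → ℝ := Function.invFun stdGaussSurv

/-- The uniform distribution on `(0,1)`: Lebesgue measure restricted to `(0,1)`. -/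
noncomputable def unif01 : Measure ℝ := volume.restrict (Set.Ioo (0 : ℝ) 1)

namespace StdGaussAux

noncomputable def G : Measure ℝ := gaussianReal 0 1

instance : IsProbabilityMeasure G := by unfold G; infer_instance

lemma G_eq_withDensity : G = volume.withDensity (gaussianPDF 0 1) :=
  gaussianReal_of_var_ne_zero 0 one_ne_zero

lemma G_ne_zero_of {s : Set ℝ} (hs : volume s ≠ 0) : G s ≠ 0 := by
  rw [G_eq_withDensity]
  rw [Ne, withDensity_apply_eq_zero (measurable_gaussianPDF 0 1)]
  have : {x : ℝ | gaussianPDF 0 1 x ≠ 0} = univ := by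
    ext x; simp [(gaussianPDF_pos 0 one_ne_zero x).ne']
  rw [this, univ_inter]; exact hs

lemma G_le_volume {s : Set ℝ} (hs : MeasurableSet s) : G s ≤ volume s := by
  rw [G_eq_withDensity, withDensity_apply _ hs]
  calc ∫⁻ x in s, gaussianPDF 0 1 x ∂volume ≤ ∫⁻ _ in s, 1 ∂volume := by
        refine lintegral_mono fun x => ?_
        unfold gaussianPDF
        refine ENNReal.ofReal_le_one.2 ?_
        rw [gaussianPDFReal]
        have h1 : (Real.sqrt (2 * Real.pi * ((1:ℝ≥0):ℝ)))⁻¹ ≤ 1 := by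
          rw [inv_le_one_iff₀]
          right
          rw [show (2 * Real.pi * ((1:ℝ≥0):ℝ)) = 2 * Real.pi by norm_num]
          exact Real.one_le_sqrt.mpr (by nlinarith [Real.pi_gt_three])
        have h2 : Real.exp (-(x - 0) ^ 2 / (2 * ((1:ℝ≥0):ℝ))) ≤ 1 := by
          rw [Real.exp_le_one_iff]
          have h3 : (0:ℝ) ≤ (x - 0)^2 := sq_nonneg _
          have h4 : ((2:ℝ) * ((1:ℝ≥0):ℝ)) = 2 := by norm_num
          rw [h4]; nlinarith
        nlinarith [Real.exp_pos (-(x - 0) ^ 2 / (2 * ((1:ℝ≥0):ℝ))),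
          (inv_nonneg.2 (Real.sqrt_nonneg (2 * Real.pi * ((1:ℝ≥0):ℝ))))]
  _ = volume s := by simp

lemma G_Iic_ne_top (x : ℝ) : G (Iic x) ≠ ⊤ := measure_ne_top _ _

lemma cdf_add_Ioc {a b : ℝ} (h : a ≤ b) :
    G (Iic b) = G (Iic a) + G (Ioc a b) := by
  rw [← Iic_union_Ioc_eq_Iic h, measure_union (Iic_disjoint_Ioc le_rfl) measurableSet_Ioc]

lemma cdf_mono : Monotone stdGaussCDF := fun a b hab => by
  unfold stdGaussCDF
  exact ENNReal.toReal_mono (measure_ne_top _ _) (measure_mono (Iic_subset_Iic.2 hab))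

lemma cdf_strictMono : StrictMono stdGaussCDF := fun a b hab => by
  unfold stdGaussCDF
  refine ENNReal.toReal_strict_mono (measure_ne_top _ _) ?_
  rw [show (gaussianReal 0 1 : Measure ℝ) = G from rfl, cdf_add_Ioc hab.le]
  refine ENNReal.lt_add_right (measure_ne_top _ _) ?_
  refine G_ne_zero_of ?_
  rw [Real.volume_Ioc, Ne, ENNReal.ofReal_eq_zero, not_le]
  linarith

lemma cdf_lipschitz {a b : ℝ} (h : a ≤ b) : stdGaussCDF b - stdGaussCDF a ≤ b - a := by
  unfold stdGaussCDF
  rw [show (gaussianReal 0 1 : Measure ℝ) = G from rfl, cdf_add_Ioc h,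
    ENNReal.toReal_add (measure_ne_top _ _) (measure_ne_top _ _)]
  have : G (Ioc a b) ≤ ENNReal.ofReal (b - a) := by
    refine (G_le_volume measurableSet_Ioc).trans ?_
    rw [Real.volume_Ioc]
  have := ENNReal.toReal_mono ENNReal.ofReal_ne_top this
  rw [ENNReal.toReal_ofReal (by linarith)] at this
  linarith

lemma cdf_continuous : Continuous stdGaussCDF := by
  refine (LipschitzWith.of_dist_le_mul (K := 1) fun a b => ?_).continuous
  rw [Real.dist_eq, Real.dist_eq, NNReal.coe_one, one_mul]
  rcases le_total a b with h | h
  · rw [abs_sub_comm, abs_of_nonneg (by linarith [cdf_mono h]), abs_of_nonpos (by linarith)]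
    have := cdf_lipschitz h; linarith
  · rw [abs_of_nonneg (by linarith [cdf_mono h]), abs_of_nonneg (by linarith)]
    have := cdf_lipschitz h; linarith

lemma cdf_pos (x : ℝ) : 0 < stdGaussCDF x := by
  unfold stdGaussCDF
  refine ENNReal.toReal_pos ?_ (measure_ne_top _ _)
  refine G_ne_zero_of ?_
  simp [Real.volume_Iic]

lemma cdf_lt_one (x : ℝ) : stdGaussCDF x < 1 := by
  unfold stdGaussCDF
  have h1 : G (Iic x) < 1 := by
    have hu : G (Iic x) + G (Ioi x) = 1 := by
      rw [← measure_union (Iic_disjoint_Ioi le_rfl) measurableSet_Ioi, Iic_union_Ioi,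
        measure_univ]
    have h2 : G (Ioi x) ≠ 0 := G_ne_zero_of (by simp [Real.volume_Ioi])
    have := ENNReal.lt_add_right (measure_ne_top G (Iic x)) h2
    rw [hu] at this; exact this
  have := ENNReal.toReal_strict_mono (by norm_num) h1
  simpa [G] using this

lemma cdf_toReal (x : ℝ) : G (Iic x) = ENNReal.ofReal (stdGaussCDF x) := by
  unfold stdGaussCDF
  exact (ENNReal.ofReal_toReal (measure_ne_top _ _)).symm

lemma tendsto_cdf_atTop : Tendsto stdGaussCDF atTop (nhds 1) := by
  have h := tendsto_measure_Iic_atTop (μ := G)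
  rw [measure_univ] at h
  have := (ENNReal.tendsto_toReal (by norm_num : (1:ℝ≥0∞) ≠ ⊤)).comp h
  rw [ENNReal.toReal_one] at this; exact this

lemma exists_cdf_lt {c : ℝ} (hc : 0 < c) : ∃ a, stdGaussCDF a < c := by
  have h := tendsto_measure_Ici_atBot (μ := G)
  rw [measure_univ] at h
  have h2 := (ENNReal.tendsto_toReal (by norm_num : (1:ℝ≥0∞) ≠ ⊤)).comp h
  simp only [ENNReal.toReal_one] at h2
  have h3 : ∀ᶠ a : ℝ in atBot, 1 - c < (G (Ici a)).toReal :=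
    h2.eventually_const_lt (by linarith)
  obtain ⟨a₀, ha₀⟩ := h3.exists
  refine ⟨a₀ - 1, ?_⟩
  have hsub : Ici a₀ ⊆ Ioi (a₀ - 1) := fun y hy => lt_of_lt_of_le (by linarith : a₀ - 1 < a₀) hy
  have h4 : (G (Ici a₀)).toReal ≤ (G (Ioi (a₀ - 1))).toReal :=
    ENNReal.toReal_mono (measure_ne_top _ _) (measure_mono hsub)
  have h5 : stdGaussCDF (a₀ - 1) + (G (Ioi (a₀ - 1))).toReal = 1 := by
    unfold stdGaussCDF
    rw [show (gaussianReal 0 1 : Measure ℝ) = G from rfl,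
      ← ENNReal.toReal_add (measure_ne_top _ _) (measure_ne_top _ _),
      ← measure_union (Iic_disjoint_Ioi le_rfl) measurableSet_Ioi, Iic_union_Ioi, measure_univ,
      ENNReal.toReal_one]
  linarith

lemma cdf_surj {c : ℝ} (h0 : 0 < c) (h1 : c < 1) : ∃ x, stdGaussCDF x = c := by
  obtain ⟨a, ha⟩ := exists_cdf_lt h0
  obtain ⟨b, hb⟩ := (tendsto_cdf_atTop.eventually_const_lt h1).exists
  have hab : a ≤ b := le_of_lt (cdf_strictMono.lt_iff_lt.1 (lt_trans ha hb))
  have := intermediate_value_Icc hab cdf_continuous.continuousOn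
  obtain ⟨x, _, hx⟩ := this ⟨ha.le, hb.le⟩
  exact ⟨x, hx⟩


lemma surv_strictAnti : StrictAnti stdGaussSurv := fun a b hab => by
  unfold stdGaussSurv; linarith [cdf_strictMono hab]

lemma surv_continuous : Continuous stdGaussSurv :=
  continuous_const.sub cdf_continuous

lemma surv_mem (x : ℝ) : stdGaussSurv x ∈ Ioo (0:ℝ) 1 :=
  ⟨by unfold stdGaussSurv; linarith [cdf_lt_one x], by unfold stdGaussSurv; linarith [cdf_pos x]⟩

lemma surv_surjOn {y : ℝ} (hy : y ∈ Ioo (0:ℝ) 1) : ∃ x, stdGaussSurv x = y := by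
  obtain ⟨x, hx⟩ := cdf_surj (by linarith [hy.2] : (0:ℝ) < 1 - y) (by linarith [hy.1])
  exact ⟨x, by unfold stdGaussSurv; linarith⟩

lemma surv_zval {y : ℝ} (hy : y ∈ Ioo (0:ℝ) 1) : stdGaussSurv (zval y) = y :=
  Function.invFun_eq (surv_surjOn hy)

lemma zval_le_iff {y : ℝ} (hy : y ∈ Ioo (0:ℝ) 1) (t : ℝ) :
    zval y ≤ t ↔ stdGaussSurv t ≤ y := by
  rw [← surv_zval hy, surv_strictAnti.le_iff_ge, surv_zval hy]

lemma zval_junk {y : ℝ} (hy : y ∉ Ioo (0:ℝ) 1) : zval y = zval 2 := by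
  have h1 : ¬∃ x, stdGaussSurv x = y := fun ⟨x, hx⟩ => hy (hx ▸ surv_mem x)
  have h2 : ¬∃ x, stdGaussSurv x = (2:ℝ) := by
    rintro ⟨x, hx⟩
    have := surv_mem x
    rw [hx] at this
    exact absurd this.2 (by norm_num)
  unfold zval
  rw [Function.invFun_neg h1, Function.invFun_neg h2]

lemma measurable_zval : Measurable zval := by
  apply measurable_of_Iic
  intro t
  have hset : zval ⁻¹' Iic t =
      (Ioo (0:ℝ) 1 ∩ Ici (stdGaussSurv t)) ∪ ((Ioo (0:ℝ) 1)ᶜ ∩ zval ⁻¹' Iic t) := by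
    ext y
    by_cases hy : y ∈ Ioo (0:ℝ) 1
    · simp only [mem_preimage, mem_Iic, mem_union, mem_inter_iff, mem_compl_iff, hy,
        not_true_eq_false, false_and, or_false, true_and, mem_Ici]
      exact zval_le_iff hy t
    · simp [hy, mem_preimage]
  rw [hset]
  refine (measurableSet_Ioo.inter measurableSet_Ici).union ?_
  by_cases hj : zval (2:ℝ) ≤ t
  · have : (Ioo (0:ℝ) 1)ᶜ ∩ zval ⁻¹' Iic t = (Ioo (0:ℝ) 1)ᶜ := by
      ext y
      simp only [mem_inter_iff, mem_compl_iff, mem_preimage, mem_Iic, and_iff_left_iff_imp]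
      intro hy; rw [zval_junk hy]; exact hj
    rw [this]; exact measurableSet_Ioo.compl
  · have : (Ioo (0:ℝ) 1)ᶜ ∩ zval ⁻¹' Iic t = ∅ := by
      ext y
      simp only [mem_inter_iff, mem_compl_iff, mem_preimage, mem_Iic, mem_empty_iff_false,
        iff_false, not_and]
      intro hy hc; rw [zval_junk hy] at hc; exact hj hc
    rw [this]; exact MeasurableSet.empty

instance : IsProbabilityMeasure unif01 := by
  constructor
  unfold unif01
  rw [Measure.restrict_apply_univ, Real.volume_Ioo]
  norm_num

lemma unif01_Iic (b : ℝ) : unif01 (Iic b) = ENNReal.ofReal (min b 1) := by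
  unfold unif01
  rw [Measure.restrict_apply measurableSet_Iic]
  rw [show ENNReal.ofReal (min b 1) = ENNReal.ofReal (min b 1 - 0) by norm_num]
  refine le_antisymm ?_ ?_
  · refine le_trans (measure_mono ?_) (le_of_eq (Real.volume_Ioc (a := 0) (b := min b 1)))
    rintro y ⟨hy1, hy2, hy3⟩
    exact ⟨hy2, le_min hy1 hy3.le⟩
  · refine le_trans (le_of_eq (Real.volume_Ioo (a := 0) (b := min b 1)).symm) (measure_mono ?_)
    rintro y ⟨hy1, hy2⟩
    have h1 := lt_of_lt_of_le hy2 (min_le_left _ _)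
    have h2 := lt_of_lt_of_le hy2 (min_le_right _ _)
    exact ⟨h1.le, hy1, h2⟩

instance : NullSingletonClass G := by
  constructor
  intro x
  have hac : G ≪ volume := by
    rw [G_eq_withDensity]; exact withDensity_absolutelyContinuous _ _
  exact hac (measure_singleton x)

lemma map_surv : G.map stdGaussSurv = unif01 := by
  haveI : IsProbabilityMeasure (G.map stdGaussSurv) :=
    Measure.isProbabilityMeasure_map surv_continuous.measurable.aemeasurable
  refine Measure.ext_of_Iic _ _ (fun x => ?_)
  rw [Measure.map_apply surv_continuous.measurable measurableSet_Iic, unif01_Iic]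
  rcases le_or_gt x 0 with hx0 | hx0
  · have h1 : stdGaussSurv ⁻¹' Iic x = ∅ := by
      ext a
      simp only [mem_preimage, mem_Iic, mem_empty_iff_false, iff_false, not_le]
      exact lt_of_le_of_lt hx0 (surv_mem a).1
    rw [h1, measure_empty]
    rw [eq_comm, ENNReal.ofReal_eq_zero]
    exact le_trans (min_le_left _ _) hx0
  rcases le_or_gt 1 x with hx1 | hx1
  · have h1 : stdGaussSurv ⁻¹' Iic x = univ := by
      ext a
      simp only [mem_preimage, mem_Iic, mem_univ, iff_true]
      exact le_trans (surv_mem a).2.le hx1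
    rw [h1, measure_univ, min_eq_right hx1]
    norm_num
  · have hx : x ∈ Ioo (0:ℝ) 1 := ⟨hx0, hx1⟩
    have h1 : stdGaussSurv ⁻¹' Iic x = Ici (zval x) := by
      ext a
      simp only [mem_preimage, mem_Iic, mem_Ici]
      exact ((zval_le_iff hx a).symm)
    rw [h1]
    have h2 : G (Ici (zval x)) = 1 - G (Iic (zval x)) := by
      rw [← measure_congr (Iio_ae_eq_Iic (μ := G) (a := zval x)),
        ← measure_univ (μ := G), ← Iio_union_Ici (a := zval x),
        measure_union (Iio_disjoint_Ici le_rfl) measurableSet_Ici]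
      rw [ENNReal.add_sub_cancel_left (measure_ne_top _ _)]
    rw [h2, cdf_toReal]
    have h3 : stdGaussCDF (zval x) = 1 - x := by
      have := surv_zval hx
      unfold stdGaussSurv at this
      linarith
    rw [h3, min_eq_left hx1.le]
    rw [show (1:ℝ≥0∞) = ENNReal.ofReal 1 by norm_num,
      ← ENNReal.ofReal_sub _ (by linarith : (0:ℝ) ≤ 1 - x)]
    norm_num

lemma map_zval : unif01.map zval = G := by
  haveI : IsProbabilityMeasure (unif01.map zval) :=
    Measure.isProbabilityMeasure_map measurable_zval.aemeasurable
  refine Measure.ext_of_Iic _ _ (fun t => ?_)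
  rw [Measure.map_apply measurable_zval measurableSet_Iic, cdf_toReal]
  unfold unif01
  rw [Measure.restrict_apply (measurable_zval measurableSet_Iic)]
  have h1 : zval ⁻¹' Iic t ∩ Ioo (0:ℝ) 1 = Ico (stdGaussSurv t) 1 := by
    ext y
    simp only [mem_inter_iff, mem_preimage, mem_Iic, mem_Ioo, mem_Ico]
    constructor
    · rintro ⟨h, h0, h1⟩
      exact ⟨(zval_le_iff ⟨h0, h1⟩ t).1 h, h1⟩
    · rintro ⟨h, h1⟩
      have h0 : 0 < y := lt_of_lt_of_le (surv_mem t).1 h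
      exact ⟨(zval_le_iff ⟨h0, h1⟩ t).2 h, h0, h1⟩
  rw [h1, Real.volume_Ico]
  congr 1
  unfold stdGaussSurv
  ring


section Rot

variable {w₁ w₂ : ℝ}

noncomputable def rotL (w₁ w₂ : ℝ) : (ℝ×ℝ) →ₗ[ℝ] (ℝ×ℝ) where
  toFun p := (w₁*p.1+w₂*p.2, w₁*p.2-w₂*p.1)
  map_add' p q := by
    cases p; cases q
    simp only [Prod.fst_add, Prod.snd_add, Prod.mk_add_mk, Prod.mk.injEq]
    constructor <;> ring
  map_smul' c p := by
    cases p
    simp only [Prod.smul_fst, Prod.smul_snd, Prod.smul_mk, smul_eq_mul, RingHom.id_apply,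
      Prod.mk.injEq]
    constructor <;> ring

lemma det_rotL (hw : w₁^2 + w₂^2 = 1) : LinearMap.det (rotL w₁ w₂) = 1 := by
  rw [← LinearMap.det_toMatrix (Module.Basis.finTwoProd ℝ), Matrix.det_fin_two]
  simp only [LinearMap.toMatrix_apply, Module.Basis.finTwoProd_zero, Module.Basis.finTwoProd_one,
    Module.Basis.coe_finTwoProd_repr, rotL, LinearMap.coe_mk, AddHom.coe_mk]
  simp only [Matrix.cons_val_zero, Matrix.cons_val_one, Matrix.head_cons]
  linear_combination hw

lemma map_rot (hw : w₁^2 + w₂^2 = 1) :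
    (volume : Measure (ℝ×ℝ)).map (fun p : ℝ×ℝ => (w₁*p.1+w₂*p.2, w₁*p.2-w₂*p.1)) = volume := by
  haveI : (volume : Measure (ℝ×ℝ)).IsAddHaarMeasure := by
    rw [Measure.volume_eq_prod]; infer_instance
  have h := Measure.map_linearMap_addHaar_eq_smul_addHaar (volume : Measure (ℝ×ℝ))
    (f := rotL w₁ w₂) (by rw [det_rotL hw]; norm_num)
  rw [det_rotL hw] at h
  simpa [rotL] using h

lemma G_prod_G : G.prod G =
    (volume.prod volume).withDensity (fun p => gaussianPDF 0 1 p.1 * gaussianPDF 0 1 p.2) := by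
  refine (Measure.prod_eq (μ := G) (ν := G)
    (μν := (volume.prod volume).withDensity fun p => gaussianPDF 0 1 p.1 * gaussianPDF 0 1 p.2)
    fun s t hs ht => ?_)
  rw [withDensity_apply _ (hs.prod ht), ← Measure.prod_restrict,
    lintegral_prod_mul (measurable_gaussianPDF 0 1).aemeasurable
      (measurable_gaussianPDF 0 1).aemeasurable]
  rw [G_eq_withDensity, withDensity_apply _ hs, withDensity_apply _ ht]

lemma pdfReal_rot {a b x y : ℝ} (h : a^2 + b^2 = x^2 + y^2) :
    gaussianPDFReal 0 1 a * gaussianPDFReal 0 1 b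
      = gaussianPDFReal 0 1 x * gaussianPDFReal 0 1 y := by
  have key : ∀ t : ℝ, gaussianPDFReal 0 1 t
      = (Real.sqrt (2 * Real.pi))⁻¹ * Real.exp (-t^2/2) := by
    intro t
    unfold gaussianPDFReal
    norm_num
  rw [key, key, key, key]
  have h2 : Real.exp (-a^2/2) * Real.exp (-b^2/2) = Real.exp (-x^2/2) * Real.exp (-y^2/2) := by
    rw [← Real.exp_add, ← Real.exp_add]
    congr 1
    linarith
  linear_combination ((Real.sqrt (2 * Real.pi))⁻¹)^2 * h2

lemma pdf_rot (hw : w₁^2 + w₂^2 = 1) (u v : ℝ) :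
    gaussianPDF 0 1 (w₁*u - w₂*v) * gaussianPDF 0 1 (w₂*u + w₁*v)
      = gaussianPDF 0 1 u * gaussianPDF 0 1 v := by
  unfold gaussianPDF
  rw [← ENNReal.ofReal_mul (gaussianPDFReal_nonneg _ _ _),
    ← ENNReal.ofReal_mul (gaussianPDFReal_nonneg _ _ _)]
  congr 1
  exact pdfReal_rot (by linear_combination (u^2+v^2) * hw)

lemma measurable_rot : Measurable (fun p : ℝ×ℝ => (w₁*p.1+w₂*p.2, w₁*p.2-w₂*p.1)) :=
  ((measurable_fst.const_mul w₁).add (measurable_snd.const_mul w₂)).prodMk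
    ((measurable_snd.const_mul w₁).sub (measurable_fst.const_mul w₂))

lemma map_rot_G (hw : w₁^2 + w₂^2 = 1) :
    (G.prod G).map (fun p : ℝ×ℝ => (w₁*p.1+w₂*p.2, w₁*p.2-w₂*p.1)) = G.prod G := by
  have hρm : Measurable (fun p : ℝ×ℝ => (w₁*p.1+w₂*p.2, w₁*p.2-w₂*p.1)) := measurable_rot
  have hρ'm : Measurable (fun q : ℝ×ℝ => (w₁*q.1 - w₂*q.2, w₂*q.1 + w₁*q.2)) :=
    ((measurable_fst.const_mul w₁).sub (measurable_snd.const_mul w₂)).prodMk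
      ((measurable_fst.const_mul w₂).add (measurable_snd.const_mul w₁))
  have hfm : Measurable (fun p : ℝ×ℝ => gaussianPDF 0 1 p.1 * gaussianPDF 0 1 p.2) :=
    ((measurable_gaussianPDF 0 1).comp measurable_fst).mul
      ((measurable_gaussianPDF 0 1).comp measurable_snd)
  rw [G_prod_G]
  ext s hs
  rw [Measure.map_apply hρm hs, withDensity_apply _ (hρm hs), withDensity_apply _ hs]
  have hmapvol : (volume.prod volume).map
      (fun p : ℝ×ℝ => (w₁*p.1+w₂*p.2, w₁*p.2-w₂*p.1)) = volume.prod volume := by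
    rw [← Measure.volume_eq_prod]; exact map_rot hw
  have step1 : ∀ p : ℝ×ℝ,
      (fun p : ℝ×ℝ => gaussianPDF 0 1 p.1 * gaussianPDF 0 1 p.2) p
        = (fun q : ℝ×ℝ => gaussianPDF 0 1 (w₁*q.1 - w₂*q.2) * gaussianPDF 0 1 (w₂*q.1 + w₁*q.2))
          ((fun p : ℝ×ℝ => (w₁*p.1+w₂*p.2, w₁*p.2-w₂*p.1)) p) := by
    intro p
    dsimp only
    rw [show w₁*(w₁*p.1+w₂*p.2) - w₂*(w₁*p.2-w₂*p.1) = p.1 by linear_combination p.1 * hw,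
      show w₂*(w₁*p.1+w₂*p.2) + w₁*(w₁*p.2-w₂*p.1) = p.2 by linear_combination p.2 * hw]
  calc ∫⁻ p in (fun p : ℝ×ℝ => (w₁*p.1+w₂*p.2, w₁*p.2-w₂*p.1)) ⁻¹' s,
        gaussianPDF 0 1 p.1 * gaussianPDF 0 1 p.2 ∂(volume.prod volume)
      = ∫⁻ p in (fun p : ℝ×ℝ => (w₁*p.1+w₂*p.2, w₁*p.2-w₂*p.1)) ⁻¹' s,
          (fun q : ℝ×ℝ => gaussianPDF 0 1 (w₁*q.1 - w₂*q.2) * gaussianPDF 0 1 (w₂*q.1 + w₁*q.2))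
            ((fun p : ℝ×ℝ => (w₁*p.1+w₂*p.2, w₁*p.2-w₂*p.1)) p) ∂(volume.prod volume) := by
        exact lintegral_congr fun p => step1 p
    _ = ∫⁻ q in s,
          gaussianPDF 0 1 (w₁*q.1 - w₂*q.2) * gaussianPDF 0 1 (w₂*q.1 + w₁*q.2)
          ∂((volume.prod volume).map (fun p : ℝ×ℝ => (w₁*p.1+w₂*p.2, w₁*p.2-w₂*p.1))) := by
        rw [setLIntegral_map hs (show Measurable fun q : ℝ×ℝ =>
          gaussianPDF 0 1 (w₁*q.1 - w₂*q.2) * gaussianPDF 0 1 (w₂*q.1 + w₁*q.2) from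
          ((measurable_gaussianPDF 0 1).comp
          ((measurable_fst.const_mul w₁).sub (measurable_snd.const_mul w₂))).mul
          ((measurable_gaussianPDF 0 1).comp
          ((measurable_fst.const_mul w₂).add (measurable_snd.const_mul w₁)))) hρm]
    _ = ∫⁻ q in s, gaussianPDF 0 1 q.1 * gaussianPDF 0 1 q.2 ∂(volume.prod volume) := by
        rw [hmapvol]
        exact lintegral_congr fun q => pdf_rot hw q.1 q.2

lemma map_sum_G (hw : w₁^2 + w₂^2 = 1) :
    (G.prod G).map (fun p : ℝ×ℝ => w₁*p.1 + w₂*p.2) = G := by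
  have h1 : (fun p : ℝ×ℝ => w₁*p.1 + w₂*p.2)
      = Prod.fst ∘ (fun p : ℝ×ℝ => (w₁*p.1+w₂*p.2, w₁*p.2-w₂*p.1)) := rfl
  rw [h1, ← Measure.map_map measurable_fst measurable_rot, map_rot_G hw,
    Measure.map_fst_prod]
  simp

end Rot

end StdGaussAux

open StdGaussAux

theorem stmt6 {Ω 𝒳 : Type*} [MeasurableSpace Ω] [MeasurableSpace 𝒳]
    (μ : Measure Ω) [IsProbabilityMeasure μ]
    (X : Ω → 𝒳) (hX : Measurable X)
    (P₁ P₂ : Ω → ℝ)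
    (hP₁m : Measurable[MeasurableSpace.comap X inferInstance] P₁) (hP₂m : Measurable P₂)
    (hval₁ : ∀ ω, P₁ ω ∈ Set.Ioo (0 : ℝ) 1) (hval₂ : ∀ ω, P₂ ω ∈ Set.Ioo (0 : ℝ) 1)
    (hu₁ : μ.map P₁ = unif01)
    (hcond : ∀ u ∈ Set.Icc (0 : ℝ) 1,
      μ[Set.indicator {ω | P₂ ω ≤ u} (fun _ => (1 : ℝ)) |
        MeasurableSpace.comap X inferInstance] =ᵐ[μ] fun _ => u)
    (w₁ w₂ : ℝ) (hw₁ : 0 < w₁) (hw₂ : 0 < w₂) (hw : w₁ ^ 2 + w₂ ^ 2 = 1) :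
    μ.map (fun ω => stdGaussSurv (w₁ * zval (P₁ ω) + w₂ * zval (P₂ ω))) = unif01 := by
  classical
  have hm : MeasurableSpace.comap X inferInstance ≤ ‹MeasurableSpace Ω› := hX.comap_le
  have hP₁ : Measurable P₁ := hP₁m.mono hm le_rfl
  haveI : SigmaFinite (μ.trim hm) := by infer_instance
  -- Step A : rectangles with Iic in the second coordinate
  have rect : ∀ s : Set Ω, MeasurableSet[MeasurableSpace.comap X inferInstance] s → ∀ b : ℝ,
      μ (s ∩ P₂ ⁻¹' (Iic b)) = μ s * unif01 (Iic b) := by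
    intro s hsm b
    have hs : MeasurableSet s := hm s hsm
    rcases lt_or_ge b 0 with hb | hb0
    · have h1 : P₂ ⁻¹' (Iic b) = ∅ := by
        ext ω
        simp only [mem_preimage, mem_Iic, mem_empty_iff_false, iff_false, not_le]
        exact lt_of_lt_of_le hb (le_of_lt (hval₂ ω).1)
      rw [h1, inter_empty, measure_empty, unif01_Iic, min_eq_left (by linarith),
        ENNReal.ofReal_of_nonpos hb.le, mul_zero]
    rcases le_or_gt b 1 with hb1 | hb1
    swap
    · have h1 : P₂ ⁻¹' (Iic b) = univ := by
        ext ω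
        simp only [mem_preimage, mem_Iic, mem_univ, iff_true]
        exact le_of_lt (lt_trans (hval₂ ω).2 hb1)
      rw [h1, inter_univ, unif01_Iic, min_eq_right hb1.le]
      norm_num
    · -- 0 ≤ b ≤ 1
      have hA : MeasurableSet (P₂ ⁻¹' (Iic b)) := hP₂m measurableSet_Iic
      have hAeq : {ω | P₂ ω ≤ b} = P₂ ⁻¹' (Iic b) := rfl
      have hf : Integrable ((P₂ ⁻¹' (Iic b)).indicator (fun _ => (1:ℝ))) μ :=
        (integrable_const (1:ℝ)).indicator hA
      have key := hcond b ⟨hb0, hb1⟩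
      rw [hAeq] at key
      have h1 : ∫ ω in s, (μ[(P₂ ⁻¹' (Iic b)).indicator (fun _ => (1:ℝ))|MeasurableSpace.comap X inferInstance]) ω ∂μ
          = ∫ ω in s, (P₂ ⁻¹' (Iic b)).indicator (fun _ => (1:ℝ)) ω ∂μ :=
        setIntegral_condExp hm hf hsm
      have h2 : ∫ ω in s, (μ[(P₂ ⁻¹' (Iic b)).indicator (fun _ => (1:ℝ))|MeasurableSpace.comap X inferInstance]) ω ∂μ
          = ∫ _ω in s, b ∂μ :=
        integral_congr_ae (ae_restrict_of_ae key)
      have h3 : ∫ _ω in s, b ∂μ = (μ s).toReal * b := by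
        rw [setIntegral_const, smul_eq_mul]; rfl
      have h4 : ∫ ω in s, (P₂ ⁻¹' (Iic b)).indicator (fun _ => (1:ℝ)) ω ∂μ
          = (μ (s ∩ P₂ ⁻¹' (Iic b))).toReal := by
        rw [setIntegral_indicator hA, setIntegral_const, smul_eq_mul, mul_one]; rfl
      have h5 : (μ (s ∩ P₂ ⁻¹' (Iic b))).toReal = (μ s).toReal * b := by
        rw [← h4, ← h1, h2, h3]
      have h6 : μ (s ∩ P₂ ⁻¹' (Iic b)) = ENNReal.ofReal ((μ s).toReal * b) := by
        rw [← h5, ENNReal.ofReal_toReal (measure_ne_top _ _)]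
      rw [h6, unif01_Iic, min_eq_left hb1, ENNReal.ofReal_mul ENNReal.toReal_nonneg,
        ENNReal.ofReal_toReal (measure_ne_top _ _)]
  -- Step B : all measurable sets in the second coordinate
  have rect2 : ∀ s : Set Ω, MeasurableSet[MeasurableSpace.comap X inferInstance] s → ∀ t : Set ℝ, MeasurableSet t →
      μ (s ∩ P₂ ⁻¹' t) = μ s * unif01 t := by
    intro s hsm t ht
    have hs : MeasurableSet s := hm s hsm
    have hfin1 : IsFiniteMeasure ((μ.restrict s).map P₂) := by
      constructor
      rw [Measure.map_apply hP₂m MeasurableSet.univ]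
      exact lt_of_le_of_lt (le_trans (Measure.restrict_apply_le _ _) (measure_mono (subset_univ _)))
        (measure_lt_top μ univ)
    have hfin2 : IsFiniteMeasure (μ s • unif01) := by
      constructor
      rw [Measure.smul_apply, smul_eq_mul]
      exact ENNReal.mul_lt_top (measure_lt_top _ _) (measure_lt_top _ _)
    have heq : (μ.restrict s).map P₂ = μ s • unif01 := by
      refine Measure.ext_of_Iic _ _ (fun b => ?_)
      rw [Measure.map_apply hP₂m measurableSet_Iic,
        Measure.restrict_apply (hP₂m measurableSet_Iic), inter_comm,
        Measure.smul_apply, smul_eq_mul]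
      exact rect s hsm b
    have := congrArg (fun ν : Measure ℝ => ν t) heq
    simpa [Measure.map_apply hP₂m ht, Measure.restrict_apply (hP₂m ht), inter_comm,
      Measure.smul_apply, smul_eq_mul] using this
  -- Step C : all rectangles
  have rect3 : ∀ sR : Set ℝ, MeasurableSet sR → ∀ t : Set ℝ, MeasurableSet t →
      μ (P₁ ⁻¹' sR ∩ P₂ ⁻¹' t) = unif01 sR * unif01 t := by
    intro sR hsR t ht
    have hfin1 : IsFiniteMeasure ((μ.restrict (P₂ ⁻¹' t)).map P₁) := by
      constructor
      rw [Measure.map_apply hP₁ MeasurableSet.univ]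
      exact lt_of_le_of_lt (le_trans (Measure.restrict_apply_le _ _) (measure_mono (subset_univ _)))
        (measure_lt_top μ univ)
    have hfin2 : IsFiniteMeasure (unif01 t • unif01) := by
      constructor
      rw [Measure.smul_apply, smul_eq_mul]
      exact ENNReal.mul_lt_top (measure_lt_top _ _) (measure_lt_top _ _)
    have heq : (μ.restrict (P₂ ⁻¹' t)).map P₁ = unif01 t • unif01 := by
      refine Measure.ext_of_Iic _ _ (fun a => ?_)
      rw [Measure.map_apply hP₁ measurableSet_Iic,
        Measure.restrict_apply (hP₁ measurableSet_Iic),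
        Measure.smul_apply, smul_eq_mul]
      have h1 := rect2 (P₁ ⁻¹' (Iic a)) (hP₁m measurableSet_Iic) t ht
      have h2 : μ (P₁ ⁻¹' (Iic a)) = unif01 (Iic a) := by
        rw [← hu₁, Measure.map_apply hP₁ measurableSet_Iic]
      rw [h1, h2, mul_comm]
    have := congrArg (fun ν : Measure ℝ => ν sR) heq
    simpa [Measure.map_apply hP₁ hsR, Measure.restrict_apply (hP₁ hsR),
      Measure.smul_apply, smul_eq_mul, mul_comm] using this
  -- Step D : joint law
  have hpair : Measurable (fun ω => (P₁ ω, P₂ ω)) := hP₁.prodMk hP₂m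
  have joint : μ.map (fun ω => (P₁ ω, P₂ ω)) = unif01.prod unif01 := by
    refine (Measure.prod_eq fun sR t hsR ht => ?_).symm
    rw [Measure.map_apply hpair (hsR.prod ht)]
    have hpre : (fun ω => (P₁ ω, P₂ ω)) ⁻¹' (sR ×ˢ t) = P₁ ⁻¹' sR ∩ P₂ ⁻¹' t := rfl
    rw [hpre]
    exact rect3 sR hsR t ht
  -- Step E : assembly
  have hzz : Measurable (Prod.map zval zval) := measurable_zval.prodMap measurable_zval
  have hsum : Measurable (fun p : ℝ×ℝ => w₁*p.1 + w₂*p.2) :=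
    (measurable_fst.const_mul w₁).add (measurable_snd.const_mul w₂)
  have hinner : Measurable (fun p : ℝ×ℝ => stdGaussSurv (w₁ * zval p.1 + w₂ * zval p.2)) :=
    surv_continuous.measurable.comp ((hzz.fst.const_mul w₁).add (hzz.snd.const_mul w₂))
  have hcomp : (fun ω => stdGaussSurv (w₁ * zval (P₁ ω) + w₂ * zval (P₂ ω)))
      = (fun p : ℝ×ℝ => stdGaussSurv (w₁ * zval p.1 + w₂ * zval p.2))
        ∘ (fun ω => (P₁ ω, P₂ ω)) := rfl
  rw [hcomp, ← Measure.map_map hinner hpair, joint]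
  have hcomp2 : (fun p : ℝ×ℝ => stdGaussSurv (w₁ * zval p.1 + w₂ * zval p.2))
      = stdGaussSurv ∘ ((fun p : ℝ×ℝ => w₁*p.1 + w₂*p.2) ∘ (Prod.map zval zval)) := rfl
  rw [hcomp2, ← Measure.map_map surv_continuous.measurable (hsum.comp hzz),
    ← Measure.map_map hsum hzz]
  rw [← Measure.map_prod_map _ _ measurable_zval measurable_zval, StdGaussAux.map_zval]
  rw [StdGaussAux.map_sum_G hw, StdGaussAux.map_surv]
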